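/- A stairstep curve converging in Fréchet distance to the diagonal of a square but not in arclength must have total curvature tending to infinity: if rectifiable curves Kᵢ converge to L in Fréchet distance but Len(Kᵢ) does not converge to Len(L), then sup_i TC(Kᵢ) = ∞. -/

import Mathlib

noncomputable section

/-- Sum of the exterior turning angles of the polygonal path through the given
list of vertices. -/
def turnSum {n : ℕ} : List (EuclideanSpace ℝ (Fin n)) → ℝ
  | a :: b :: c :: rest =>
      InnerProductGeometry.angle (b - a) (c - b) + turnSum (b :: c :: rest)
  | _ => 0

/-- The set of turning-angle sums of polygons inscribed in `γ`, with vertex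
parameters drawn (in increasing order) from `[0,1]`. -/
def tcSet {n : ℕ} (γ : ℝ → EuclideanSpace ℝ (Fin n)) : Set ℝ :=
  {x | ∃ t : List ℝ, t.Chain' (· < ·) ∧ (∀ u ∈ t, u ∈ Set.Icc (0:ℝ) 1) ∧
    x = turnSum (t.map γ)}

/-- The total curvature of the curve `γ : [0,1] → ℝⁿ`: the supremum of the
turning-angle sums of inscribed polygons. -/
def totCurv {n : ℕ} (γ : ℝ → EuclideanSpace ℝ (Fin n)) : ℝ := sSup (tcSet γ)

/-- The arclength of the curve `γ : [0,1] → ℝⁿ`. -/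
def len {n : ℕ} (γ : ℝ → EuclideanSpace ℝ (Fin n)) : ℝ :=
  (eVariationOn γ (Set.Icc 0 1)).toReal

/-- The Fréchet distance between the curves `K, L : [0,1] → ℝⁿ`: the infimum
over (strictly monotone, continuous, endpoint-preserving) reparametrizations
`σ` of the supremum of `‖K t − L (σ t)‖`. -/
def frechetDist {n : ℕ} (K L : ℝ → EuclideanSpace ℝ (Fin n)) : ℝ :=
  ⨅ σ : {f : ℝ → ℝ // ContinuousOn f (Set.Icc 0 1) ∧
      StrictMonoOn f (Set.Icc 0 1) ∧ f 0 = 0 ∧ f 1 = 1},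
    ⨆ t : Set.Icc (0:ℝ) 1, ‖K t - L (σ.1 t)‖


open Real InnerProductGeometry
open scoped RealInnerProductSpace

variable {V : Type*} [NormedAddCommGroup V] [InnerProductSpace ℝ V]

private lemma arccos_antitone : Antitone Real.arccos := fun x y h =>
  sub_le_sub_left (Real.monotone_arcsin h) _

/-- Gram-type inequality for unit vectors. -/
private lemma gram_key {x y z : V} (hx : ‖x‖ = 1) (hy : ‖y‖ = 1) (hz : ‖z‖ = 1) :
    (⟪x,z⟫ - ⟪x,y⟫ * ⟪y,z⟫)^2 ≤ (1 - ⟪x,y⟫^2) * (1 - ⟪y,z⟫^2) := by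
  set a := ⟪x,y⟫ with ha
  set b := ⟪y,z⟫ with hb
  set c := ⟪x,z⟫ with hc
  rcases lt_or_ge (a^2) 1 with h1 | h1
  · have hw : (0:ℝ) ≤ ⟪(1-a^2) • z - (c - a*b) • x - (b - a*c) • y,
        (1-a^2) • z - (c - a*b) • x - (b - a*c) • y⟫ := real_inner_self_nonneg
    have hxx : ⟪x,x⟫ = 1 := by rw [real_inner_self_eq_norm_mul_norm, hx]; ring
    have hyy : ⟪y,y⟫ = 1 := by rw [real_inner_self_eq_norm_mul_norm, hy]; ring
    have hzz : ⟪z,z⟫ = 1 := by rw [real_inner_self_eq_norm_mul_norm, hz]; ring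
    have hxy : ⟪y,x⟫ = a := by rw [real_inner_comm]
    have hyz : ⟪z,y⟫ = b := by rw [real_inner_comm]
    have hxz : ⟪z,x⟫ = c := by rw [real_inner_comm]
    simp only [inner_sub_left, inner_sub_right, real_inner_smul_left, real_inner_smul_right,
      hxx, hyy, hzz, hxy, hyz, hxz, ← ha, ← hb, ← hc] at hw
    nlinarith [hw, h1, sq_nonneg (c - a*b), sq_nonneg (b - a*c)]
  · -- |a| = 1, so x = ±y
    have h2 : |a| ≤ 1 := by
      have := abs_real_inner_le_norm x y
      rwa [hx, hy, mul_one] at this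
    have h3 : a^2 = 1 := le_antisymm (by nlinarith [abs_nonneg a, sq_abs a]) h1
    have hcab : c = a * b := by
      rcases mul_self_eq_one_iff.mp (show a * a = 1 by nlinarith) with h | h
      · have hxy1 : ⟪x,y⟫ = ‖x‖ * ‖y‖ := by rw [hx, hy, ← ha, h]; ring
        have := inner_eq_norm_mul_iff_real.mp hxy1
        rw [hx, hy, one_smul, one_smul] at this
        rw [hc, this, h, hb]; ring
      · have hxy1 : ⟪x,-y⟫ = ‖x‖ * ‖-y‖ := by
          rw [inner_neg_right, hx, norm_neg, hy, ← ha, h]; ring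
        have := inner_eq_norm_mul_iff_real.mp hxy1
        rw [hx, norm_neg, hy, one_smul, one_smul] at this
        rw [hc, this, h, inner_neg_left, hb]; ring
    rw [hcab]
    nlinarith [sq_nonneg b, sq_nonneg (1-b^2)]

private lemma angle_triangle_unit {x y z : V} (hx : ‖x‖ = 1) (hy : ‖y‖ = 1) (hz : ‖z‖ = 1) :
    angle x z ≤ angle x y + angle y z := by
  have h1x : |⟪x,y⟫| ≤ 1 := by have := abs_real_inner_le_norm x y; rwa [hx, hy, mul_one] at this
  have h1y : |⟪y,z⟫| ≤ 1 := by have := abs_real_inner_le_norm y z; rwa [hy, hz, mul_one] at this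
  have h1z : |⟪x,z⟫| ≤ 1 := by have := abs_real_inner_le_norm x z; rwa [hx, hz, mul_one] at this
  have hax : angle x y = Real.arccos ⟪x,y⟫ := by rw [angle, hx, hy]; norm_num
  have hay : angle y z = Real.arccos ⟪y,z⟫ := by rw [angle, hy, hz]; norm_num
  have haz : angle x z = Real.arccos ⟪x,z⟫ := by rw [angle, hx, hz]; norm_num
  set a := ⟪x,y⟫
  set b := ⟪y,z⟫
  set c := ⟪x,z⟫
  rw [hax, hay, haz]
  set A := Real.arccos a with hA
  set B := Real.arccos b with hB
  rcases le_or_gt π (A + B) with h | h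
  · exact le_trans (Real.arccos_le_pi c) h
  · have hAB0 : 0 ≤ A + B := add_nonneg (Real.arccos_nonneg a) (Real.arccos_nonneg b)
    have hcos : Real.cos (A + B) = a * b - Real.sqrt (1 - a^2) * Real.sqrt (1 - b^2) := by
      rw [Real.cos_add, hA, hB, Real.cos_arccos (abs_le.mp h1x).1 (abs_le.mp h1x).2,
        Real.cos_arccos (abs_le.mp h1y).1 (abs_le.mp h1y).2, Real.sin_arccos, Real.sin_arccos]
    have hkey := gram_key hx hy hz
    have ha2 : (0:ℝ) ≤ 1 - a^2 := by nlinarith [sq_abs a, abs_nonneg a, h1x]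
    have hsq : |c - a * b| ≤ Real.sqrt (1 - a^2) * Real.sqrt (1 - b^2) := by
      rw [← Real.sqrt_mul ha2, ← Real.sqrt_sq_eq_abs]
      exact Real.sqrt_le_sqrt hkey
    have hc_ge : Real.cos (A + B) ≤ c := by
      rw [hcos]
      have := (abs_le.mp hsq).1
      linarith
    calc Real.arccos c ≤ Real.arccos (Real.cos (A + B)) := arccos_antitone hc_ge
      _ = A + B := Real.arccos_cos hAB0 h.le

/-- The triangle inequality for angles between vectors. -/
lemma angle_triangle (x y z : V) : angle x z ≤ angle x y + angle y z := by
  by_cases hx : x = 0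
  · subst hx; simp only [angle_zero_left]
    linarith [angle_nonneg y z]
  by_cases hy : y = 0
  · subst hy; simp only [angle_zero_left, angle_zero_right]
    linarith [angle_le_pi x z]
  by_cases hz : z = 0
  · subst hz; simp only [angle_zero_right]
    linarith [angle_nonneg x y]
  have nx : (0:ℝ) < ‖x‖ := norm_pos_iff.mpr hx
  have ny : (0:ℝ) < ‖y‖ := norm_pos_iff.mpr hy
  have nz : (0:ℝ) < ‖z‖ := norm_pos_iff.mpr hz
  have hux : ‖(‖x‖⁻¹ • x)‖ = 1 := by rw [norm_smul, norm_inv, norm_norm, inv_mul_cancel₀ nx.ne']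
  have huy : ‖(‖y‖⁻¹ • y)‖ = 1 := by rw [norm_smul, norm_inv, norm_norm, inv_mul_cancel₀ ny.ne']
  have huz : ‖(‖z‖⁻¹ • z)‖ = 1 := by rw [norm_smul, norm_inv, norm_norm, inv_mul_cancel₀ nz.ne']
  have e1 : angle (‖x‖⁻¹ • x) (‖z‖⁻¹ • z) = angle x z := by
    rw [angle_smul_left_of_pos _ _ (inv_pos.mpr nx), angle_smul_right_of_pos _ _ (inv_pos.mpr nz)]
  have e2 : angle (‖x‖⁻¹ • x) (‖y‖⁻¹ • y) = angle x y := by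
    rw [angle_smul_left_of_pos _ _ (inv_pos.mpr nx), angle_smul_right_of_pos _ _ (inv_pos.mpr ny)]
  have e3 : angle (‖y‖⁻¹ • y) (‖z‖⁻¹ • z) = angle y z := by
    rw [angle_smul_left_of_pos _ _ (inv_pos.mpr ny), angle_smul_right_of_pos _ _ (inv_pos.mpr nz)]
  rw [← e1, ← e2, ← e3]
  exact angle_triangle_unit hux huy huz

def pathLen {n : ℕ} : List (EuclideanSpace ℝ (Fin n)) → ℝ
  | a :: b :: r => dist a b + pathLen (b :: r)
  | _ => 0

variable {n : ℕ}

lemma turnSum_nil : turnSum (n := n) [] = 0 := rfl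
lemma turnSum_single (a : EuclideanSpace ℝ (Fin n)) : turnSum [a] = 0 := rfl
lemma turnSum_pair (a b : EuclideanSpace ℝ (Fin n)) : turnSum [a, b] = 0 := rfl
lemma turnSum_cons (a b c : EuclideanSpace ℝ (Fin n)) (r : List (EuclideanSpace ℝ (Fin n))) :
    turnSum (a :: b :: c :: r) =
      InnerProductGeometry.angle (b - a) (c - b) + turnSum (b :: c :: r) := rfl

lemma pathLen_cons (a b : EuclideanSpace ℝ (Fin n)) (r : List (EuclideanSpace ℝ (Fin n))) :
    pathLen (a :: b :: r) = dist a b + pathLen (b :: r) := rfl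

lemma turnSum_nonneg : ∀ (l : List (EuclideanSpace ℝ (Fin n))), 0 ≤ turnSum l
  | a :: b :: c :: r => by
      rw [turnSum_cons]
      exact add_nonneg (InnerProductGeometry.angle_nonneg _ _) (turnSum_nonneg (b :: c :: r))
  | [] => le_of_eq rfl
  | [_] => le_of_eq rfl
  | [_, _] => le_of_eq rfl

lemma pathLen_nonneg : ∀ (l : List (EuclideanSpace ℝ (Fin n))), 0 ≤ pathLen l
  | a :: b :: r => by
      rw [pathLen_cons]
      exact add_nonneg dist_nonneg (pathLen_nonneg (b :: r))
  | [] => le_of_eq rfl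
  | [_] => le_of_eq rfl

lemma turnSum_short (l : List (EuclideanSpace ℝ (Fin n))) (h : l.length ≤ 2) : turnSum l = 0 := by
  match l with
  | [] => rfl
  | [_] => rfl
  | [_, _] => rfl
  | _ :: _ :: _ :: _ => simp at h

private lemma step_ineq (a b u : EuclideanSpace ℝ (Fin n)) (hu : ‖u‖ = 1) {s α : ℝ}
    (hs : InnerProductGeometry.angle (b - a) u ≤ s) (hsα : s ≤ α) (hα2 : α ≤ Real.pi / 2) :
    Real.cos α * dist a b ≤ ⟪b - a, u⟫ := by
  have h1 : ⟪b - a, u⟫ = Real.cos (InnerProductGeometry.angle (b - a) u) * (‖b - a‖ * ‖u‖) :=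
    (InnerProductGeometry.cos_angle_mul_norm_mul_norm _ _).symm
  have h2 : Real.cos α ≤ Real.cos (InnerProductGeometry.angle (b - a) u) := by
    apply Real.cos_le_cos_of_nonneg_of_le_pi (InnerProductGeometry.angle_nonneg _ _)
      (by linarith [Real.pi_pos]) (le_trans hs hsα)
  rw [h1, hu, mul_one, dist_eq_norm, norm_sub_rev]
  exact mul_le_mul_of_nonneg_right h2 (norm_nonneg _)

private lemma block_aux {α : ℝ} (hα2 : α ≤ Real.pi / 2) :
    ∀ (t : List (EuclideanSpace ℝ (Fin n))) (a b u : EuclideanSpace ℝ (Fin n)), ‖u‖ = 1 →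
    ∀ s : ℝ, InnerProductGeometry.angle (b - a) u ≤ s →
    s + turnSum (a :: b :: t) ≤ α →
    Real.cos α * pathLen (a :: b :: t) ≤ ⟪(a :: b :: t).getLast (by simp) - a, u⟫
  | [], a, b, u, hu, s, hs, hsum => by
      have hsα : s ≤ α := by
        have := turnSum_pair a b
        linarith [hsum, this]
      simpa [pathLen] using step_ineq a b u hu hs hsα hα2
  | c :: r, a, b, u, hu, s, hs, hsum => by
      have h0 : 0 ≤ turnSum (b :: c :: r) := turnSum_nonneg _
      have hang : (0:ℝ) ≤ InnerProductGeometry.angle (b - a) (c - b) :=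
        InnerProductGeometry.angle_nonneg _ _
      rw [turnSum_cons] at hsum
      have hs' : InnerProductGeometry.angle (c - b) u ≤
          s + InnerProductGeometry.angle (b - a) (c - b) := by
        calc InnerProductGeometry.angle (c - b) u
            ≤ InnerProductGeometry.angle (c - b) (b - a) + InnerProductGeometry.angle (b - a) u :=
              angle_triangle _ _ _
          _ ≤ s + InnerProductGeometry.angle (b - a) (c - b) := by
              rw [InnerProductGeometry.angle_comm (c - b) (b - a)]; linarith
      have hsum' : (s + InnerProductGeometry.angle (b - a) (c - b)) + turnSum (b :: c :: r) ≤ α :=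
        by linarith
      have IH := block_aux hα2 r b c u hu _ hs' hsum'
      have hstep : Real.cos α * dist a b ≤ ⟪b - a, u⟫ :=
        step_ineq a b u hu hs (by linarith) hα2
      have hlast : (a :: b :: c :: r).getLast (by simp) = (b :: c :: r).getLast (by simp) := by
        simp [List.getLast]
      rw [pathLen_cons, hlast]
      have hsplit : ⟪(b :: c :: r).getLast (by simp) - a, u⟫ =
          ⟪b - a, u⟫ + ⟪(b :: c :: r).getLast (by simp) - b, u⟫ := by
        rw [← inner_add_left]; congr 1; abel
      rw [hsplit, mul_add]
      exact add_le_add hstep IH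

lemma block {α : ℝ} (hα2 : α < Real.pi / 2) (l : List (EuclideanSpace ℝ (Fin n))) (hl : l ≠ [])
    (h : turnSum l ≤ α) :
    Real.cos α * pathLen l ≤ dist (l.head hl) (l.getLast hl) := by
  match l with
  | [a] => simp [pathLen]
  | a :: b :: m =>
    by_cases hab : b - a = 0
    · match m with
      | [] =>
        have : b = a := by rwa [sub_eq_zero] at hab
        simp [pathLen, this]
      | c :: r =>
        exfalso
        rw [turnSum_cons, hab, InnerProductGeometry.angle_zero_left] at h
        linarith [turnSum_nonneg (b :: c :: r)]
    · set u := ‖b - a‖⁻¹ • (b - a) with hu_def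
      have hbne : (0:ℝ) < ‖b - a‖ := norm_pos_iff.mpr hab
      have hu : ‖u‖ = 1 := by
        rw [hu_def, norm_smul, norm_inv, norm_norm, inv_mul_cancel₀ hbne.ne']
      have hang0 : InnerProductGeometry.angle (b - a) u = 0 := by
        rw [hu_def, InnerProductGeometry.angle_smul_right_of_pos _ _ (inv_pos.mpr hbne),
          InnerProductGeometry.angle_self hab]
      have hmain := block_aux (n := n) (le_of_lt hα2) m a b u hu 0 (le_of_eq hang0) (by linarith)
      have hcs : ⟪(a :: b :: m).getLast (by simp) - a, u⟫ ≤ ‖(a :: b :: m).getLast (by simp : a :: b :: m ≠ []) - a‖ := by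
        simpa [hu] using real_inner_le_norm ((a :: b :: m).getLast (by simp) - a) u
      have hle := le_trans hmain hcs
      show Real.cos α * pathLen (a :: b :: m) ≤ dist a ((a :: b :: m).getLast hl)
      rw [dist_comm, dist_eq_norm]
      exact hle


lemma pathLen_short (l : List (EuclideanSpace ℝ (Fin n))) (h : l.length ≤ 1) : pathLen l = 0 := by
  match l with
  | [] => rfl
  | [_] => rfl
  | _ :: _ :: _ => simp at h

lemma turnSum_take_drop : ∀ (k : ℕ) (t : List (EuclideanSpace ℝ (Fin n))), k + 2 ≤ t.length →
    turnSum t = turnSum (t.take (k+2)) + turnSum (t.drop k)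
  | 0, t, _ => by
      rw [List.drop_zero, turnSum_short (t.take 2) (by simp)]
      ring
  | (k+1), [], h => by simp at h
  | (k+1), [_], h => by simp at h
  | (k+1), [_, _], h => by simp at h
  | (k+1), a :: b :: c :: r, h => by
      have hlen : k + 2 ≤ (b :: c :: r).length := by simp at h ⊢; omega
      have IH := turnSum_take_drop k (b :: c :: r) hlen
      have e1 : (a :: b :: c :: r).take (k+1+2) = a :: (b :: c :: r).take (k+2) := rfl
      have e2 : (b :: c :: r).take (k+2) = b :: c :: r.take k := rfl
      have e3 : (a :: b :: c :: r).drop (k+1) = (b :: c :: r).drop k := rfl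
      rw [e1, e2, e3]
      simp only [turnSum_cons]
      rw [← e2]
      linarith

lemma pathLen_take_drop : ∀ (k : ℕ) (t : List (EuclideanSpace ℝ (Fin n))), k + 1 ≤ t.length →
    pathLen t = pathLen (t.take (k+1)) + pathLen (t.drop k)
  | 0, t, _ => by
      rw [List.drop_zero, pathLen_short (t.take 1) (by simp)]
      ring
  | (k+1), [], h => by simp at h
  | (k+1), [_], h => by simp at h
  | (k+1), a :: b :: r, h => by
      have hlen : k + 1 ≤ (b :: r).length := by simp at h ⊢; omega
      have IH := pathLen_take_drop k (b :: r) hlen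
      have e1 : (a :: b :: r).take (k+1+1) = a :: (b :: r).take (k+1) := rfl
      have e2 : (b :: r).take (k+1) = b :: r.take k := rfl
      have e3 : (a :: b :: r).drop (k+1) = (b :: r).drop k := rfl
      rw [e1, e2, e3]
      simp only [pathLen_cons]
      rw [← e2]
      linarith

lemma getLast?_drop' {γ : Type*} (k : ℕ) (t : List γ) (h : k < t.length) :
    (t.drop k).getLast? = t.getLast? := by
  rw [List.getLast?_eq_getElem?, List.getLast?_eq_getElem?, List.getElem?_drop,
    List.length_drop]
  congr 1
  omega

lemma block' {α : ℝ} (hα2 : α < Real.pi / 2) (l : List (EuclideanSpace ℝ (Fin n)))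
    {x y : EuclideanSpace ℝ (Fin n)} (hh : l.head? = some x) (hg : l.getLast? = some y)
    (h : turnSum l ≤ α) : Real.cos α * pathLen l ≤ dist x y := by
  have hne : l ≠ [] := by rintro rfl; simp at hh
  have h1 : l.head hne = x := by
    have := List.head?_eq_head hne (l := l)
    rw [hh] at this; exact (Option.some_inj.mp this.symm)
  have h2 : l.getLast hne = y := by
    have := List.getLast?_eq_getLast hne
    rw [hg] at this; exact Option.some_inj.mp this.symm
  rw [← h1, ← h2]
  exact block hα2 l hne h

lemma pathLen_cons' (a : EuclideanSpace ℝ (Fin n)) {l : List (EuclideanSpace ℝ (Fin n))}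
    {x : EuclideanSpace ℝ (Fin n)} (hh : l.head? = some x) :
    pathLen (a :: l) = dist a x + pathLen l := by
  match l, hh with
  | b :: r, hh => simp only [List.head?_cons, Option.some_inj] at hh; rw [pathLen_cons, hh]


open scoped Classical in
lemma greedy {β : Type*} (f : β → EuclideanSpace ℝ (Fin n)) {α : ℝ} (hα : 0 < α)
    (hα2 : α < Real.pi / 2) :
    ∀ N : ℕ, ∀ t : List β, t.length ≤ N → ∀ A : ℝ, 0 ≤ A → turnSum (t.map f) ≤ A →
    ∃ r : List β, r.Sublist t ∧ r.head? = t.head? ∧ r.getLast? = t.getLast? ∧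
      ((r.length : ℝ) ≤ A / α + 2) ∧ Real.cos α * pathLen (t.map f) ≤ pathLen (r.map f) := by
  intro N
  induction N with
  | zero =>
    intro t ht A hA hts
    have : t = [] := List.eq_nil_of_length_eq_zero (Nat.le_zero.mp ht)
    subst this
    exact ⟨[], List.Sublist.refl _, rfl, rfl,
      by simp only [List.length_nil, Nat.cast_zero]; linarith [div_nonneg hA hα.le],
      by simp [pathLen]⟩
  | succ N IH =>
    intro t ht A hA hts
    have hAα : 0 ≤ A / α := div_nonneg hA hα.le
    rcases le_or_gt (turnSum (t.map f)) α with hle | hgt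
    · -- single block
      match t with
      | [] => exact ⟨[], List.Sublist.refl _, rfl, rfl,
          by simp only [List.length_nil, Nat.cast_zero]; linarith, by simp [pathLen]⟩
      | [a] => exact ⟨[a], List.Sublist.refl _, rfl, rfl,
          by simp only [List.length_singleton, Nat.cast_one]; linarith,
          by simp [pathLen]⟩
      | a :: b :: m =>
        have hne : (a :: b :: m) ≠ [] := by simp
        set y := (a :: b :: m).getLast hne with hy
        have hym : y ∈ b :: m := by
          have hy2 : y = (b :: m).getLast (by simp) := by
            rw [hy]
            exact List.getLast_cons (by simp)
          rw [hy2]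
          exact List.getLast_mem _
        refine ⟨[a, y], ?_, rfl, ?_, ?_, ?_⟩
        · exact (List.singleton_sublist.mpr hym).cons₂ a
        · simp [List.getLast?_eq_getLast hne, hy]
        · simp; push_cast; linarith
        · have hblock := block' (n := n) hα2 ((a :: b :: m).map f)
            (x := f a) (y := f y) (by simp) ?_ hle
          · calc Real.cos α * pathLen ((a :: b :: m).map f) ≤ dist (f a) (f y) := hblock
              _ = pathLen ([a, y].map f) := by simp [pathLen]
          · rw [List.getLast?_map]
            simp [List.getLast?_eq_getLast hne, hy]
    · -- recursive case
      set lm := t.map f with hlm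
      have hlml : lm.length = t.length := by simp [hlm]
      have hlen3 : 3 ≤ t.length := by
        by_contra h'
        push_neg at h'
        have h2 : lm.length ≤ 2 := by omega
        rw [turnSum_short lm h2] at hgt
        linarith
      have hPex : ∃ j, α < turnSum (lm.take (j+1)) := by
        refine ⟨t.length - 1, ?_⟩
        have : lm.take (t.length - 1 + 1) = lm := List.take_of_length_le (by omega)
        rw [this]; exact hgt
      set j₀ := Nat.find hPex with hj₀def
      have hj₀ : α < turnSum (lm.take (j₀+1)) := Nat.find_spec hPex
      have hj₀2 : 2 ≤ j₀ := by
        by_contra h'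
        push_neg at h'
        have : turnSum (lm.take (j₀+1)) = 0 :=
          turnSum_short _ (le_trans (List.length_take_le _ _) (by omega))
        rw [this] at hj₀; linarith
      have hj₀le : j₀ ≤ t.length - 1 := Nat.find_min' hPex (by
        have : lm.take (t.length - 1 + 1) = lm := List.take_of_length_le (by omega)
        rw [this]; exact hgt)
      have hprefix : turnSum (lm.take j₀) ≤ α := by
        have h' := Nat.find_min hPex (m := j₀ - 1) (by omega)
        push_neg at h'
        have e : j₀ - 1 + 1 = j₀ := by omega
        rwa [e] at h'
      have hsplitT : turnSum lm = turnSum (lm.take (j₀+1)) + turnSum (lm.drop (j₀-1)) := by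
        have := turnSum_take_drop (j₀-1) lm (by omega)
        have e : j₀ - 1 + 2 = j₀ + 1 := by omega
        rwa [e] at this
      set s := t.drop (j₀ - 1) with hs
      have hsm : s.map f = lm.drop (j₀-1) := List.map_drop
      set A' := A - turnSum (lm.take (j₀+1)) with hA'def
      have hsts : turnSum (s.map f) ≤ A' := by rw [hsm]; linarith
      have hA' : 0 ≤ A' := le_trans (turnSum_nonneg _) hsts
      have hslen : s.length ≤ N := by
        rw [hs, List.length_drop]; omega
      obtain ⟨r', hr'sub, hr'head, hr'last, hr'len, hr'path⟩ := IH s hslen A' hA' hsts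
      have hsne : s ≠ [] := by
        apply List.ne_nil_of_length_pos
        rw [hs, List.length_drop]; omega
      have htne : t ≠ [] := by apply List.ne_nil_of_length_pos; omega
      have hr'ne : r' ≠ [] := by
        intro h'
        rw [h'] at hr'head
        rw [List.head?_eq_head hsne] at hr'head
        simp at hr'head
      refine ⟨t.head htne :: r', ?_, ?_, ?_, ?_, ?_⟩
      · -- sublist
        have h1 : t.tail.drop (j₀ - 2) = t.drop (j₀ - 1) := by
          rw [← List.drop_one, List.drop_drop]
          congr 1
          omega
        have h2 : r'.Sublist t.tail := by
          have h2a : r'.Sublist (t.tail.drop (j₀ - 2)) := by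
            rw [h1]; exact hr'sub
          exact h2a.trans (List.drop_sublist _ _)
        have h3 := h2.cons₂ (t.head htne)
        rwa [List.cons_head_tail] at h3
      · rw [List.head?_eq_head htne]; rfl
      · have hcl : (t.head htne :: r').getLast? = r'.getLast? := by
          rw [List.getLast?_eq_getLast (l := t.head htne :: r') (by simp), List.getLast_cons hr'ne,
            List.getLast?_eq_getLast hr'ne]
        rw [hcl, hr'last, hs, getLast?_drop' _ _ (by omega)]
      · have hA'le : A' ≤ A - α := by rw [hA'def]; linarith
        have : (r'.length : ℝ) ≤ (A - α)/α + 2 :=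
          le_trans hr'len (by gcongr)
        rw [sub_div, div_self hα.ne'] at this
        simp only [List.length_cons]
        push_cast
        linarith
      · -- path length
        have hsplitP : pathLen lm = pathLen (lm.take j₀) + pathLen (lm.drop (j₀-1)) := by
          have := pathLen_take_drop (j₀-1) lm (by omega)
          have e : j₀ - 1 + 1 = j₀ := by omega
          rwa [e] at this
        have htake_head : (lm.take j₀).head? = some (f (t.head htne)) := by
          rw [List.head?_eq_getElem?, List.getElem?_take, if_pos (by omega),
            ← List.head?_eq_getElem?, hlm, List.head?_map, List.head?_eq_head htne]
          rfl
        have htake_last : (lm.take j₀).getLast? = (lm.drop (j₀-1)).head? := by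
          rw [List.getLast?_eq_getElem?, List.length_take, List.head?_drop]
          have e : min j₀ lm.length - 1 = j₀ - 1 := by omega
          rw [e, List.getElem?_take, if_pos (by omega)]
        have hs_head : (lm.drop (j₀-1)).head? = some (f (s.head hsne)) := by
          rw [← hsm, List.head?_map, List.head?_eq_head hsne]; rfl
        have hblock := block' (n := n) hα2 (lm.take j₀) (x := f (t.head htne))
          (y := f (s.head hsne)) htake_head (htake_last.trans hs_head) hprefix
        have hr'head' : (r'.map f).head? = some (f (s.head hsne)) := by
          rw [List.head?_map, hr'head, List.head?_eq_head hsne]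
          rfl
        have hconsPath : pathLen ((t.head htne :: r').map f) =
            dist (f (t.head htne)) (f (s.head hsne)) + pathLen (r'.map f) := by
          rw [List.map_cons]
          exact pathLen_cons' _ hr'head'
        show Real.cos α * pathLen lm ≤ pathLen ((t.head htne :: r').map f)
        rw [hsplitP, mul_add, hconsPath]
        apply add_le_add hblock
        calc Real.cos α * pathLen (lm.drop (j₀-1))
            = Real.cos α * pathLen (s.map f) := by rw [hsm]
          _ ≤ pathLen (r'.map f) := hr'path


section Bridge

open scoped Classical

private lemma destutter'_head?' {R : ℝ → ℝ → Prop} [DecidableRel R] :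
    ∀ (l : List ℝ) (a : ℝ), (l.destutter' R a).head? = some a
  | [], a => by simp [List.destutter'_nil]
  | b :: l, a => by
    by_cases h : R a b
    · rw [List.destutter'_cons_pos (h := h)]; rfl
    · rw [List.destutter'_cons_neg (h := h)]; exact destutter'_head?' l a

private lemma destutter'_pathLen (γ : ℝ → EuclideanSpace ℝ (Fin n)) :
    ∀ (l : List ℝ) (a : ℝ), (a :: l).Chain' (· ≤ ·) →
      pathLen ((l.destutter' (· < ·) a).map γ) = pathLen ((a :: l).map γ)
  | [], a, _ => by simp [List.destutter'_nil]
  | b :: l', a, hch => by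
    have hab : a ≤ b := (List.isChain_cons_cons.mp hch).1
    have hch' : (b :: l').Chain' (· ≤ ·) := (List.isChain_cons_cons.mp hch).2
    by_cases h : a < b
    · rw [List.destutter'_cons_pos (h := h), List.map_cons]
      have hhead : ((l'.destutter' (· < ·) b).map γ).head? = some (γ b) := by
        rw [List.head?_map, destutter'_head?' l' b]; rfl
      rw [pathLen_cons' _ hhead, destutter'_pathLen γ l' b hch']
      rfl
    · have hba : b = a := le_antisymm (not_lt.mp h) hab
      subst hba
      rw [List.destutter'_cons_neg (h := h)]
      rw [destutter'_pathLen γ l' b hch']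
      rw [show pathLen (List.map γ (b :: b :: l')) =
        dist (γ b) (γ b) + pathLen (List.map γ (b :: l')) from rfl]
      simp

private lemma destutter_pathLen (γ : ℝ → EuclideanSpace ℝ (Fin n)) (l : List ℝ)
    (hch : l.Chain' (· ≤ ·)) :
    pathLen ((l.destutter (· < ·)).map γ) = pathLen (l.map γ) := by
  cases l with
  | nil => rfl
  | cons a l' => rw [List.destutter_cons']; exact destutter'_pathLen γ l' a hch

private lemma pathLen_eq_sum (γ : ℝ → EuclideanSpace ℝ (Fin n)) :
    ∀ (l : List ℝ) (d : ℝ), pathLen (l.map γ) =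
      ∑ i ∈ Finset.range (l.length - 1), dist (γ (l.getD i d)) (γ (l.getD (i+1) d))
  | [], d => by simp [pathLen]
  | [a], d => by simp [pathLen]
  | a :: b :: r, d => by
    have IH := pathLen_eq_sum γ (b :: r) d
    have hl : (a :: b :: r).length - 1 = ((b :: r).length - 1) + 1 := by simp
    rw [hl, Finset.sum_range_succ']
    have h1 : ∑ i ∈ Finset.range ((b :: r).length - 1),
        dist (γ ((a :: b :: r).getD (i+1) d)) (γ ((a :: b :: r).getD (i+1+1) d))
        = ∑ i ∈ Finset.range ((b :: r).length - 1),
        dist (γ ((b :: r).getD i d)) (γ ((b :: r).getD (i+1) d)) := by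
      apply Finset.sum_congr rfl
      intro i _
      rw [List.getD_cons_succ, List.getD_cons_succ]
    rw [h1, ← IH]
    show dist (γ a) (γ b) + pathLen (List.map γ (b :: r)) = _
    rw [List.getD_cons_succ, List.getD_cons_zero, List.getD_cons_zero]
    ring

private lemma pathLen_le_eVariation (γ : ℝ → EuclideanSpace ℝ (Fin n)) {s : Set ℝ}
    (hγ : BoundedVariationOn γ s) (l : List ℝ) (hch : l.Chain' (· ≤ ·))
    (hmem : ∀ u ∈ l, u ∈ s) :
    pathLen (l.map γ) ≤ (eVariationOn γ s).toReal := by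
  cases l with
  | nil => simpa [pathLen] using ENNReal.toReal_nonneg
  | cons x l₀ =>
  set l : List ℝ := x :: l₀ with hldef
  have hne : l ≠ [] := by simp [hldef]
  have hp : l.Pairwise (· ≤ ·) := List.isChain_iff_pairwise.mp hch
  set d := l.getLast hne with hd
  set u : ℕ → ℝ := fun i => l.getD i d with hu_def
  have hle_last : ∀ i, (hi : i < l.length) → l[i] ≤ d := by
    intro i hi
    rw [hd, List.getLast_eq_getElem]
    rcases lt_or_eq_of_le (by omega : i ≤ l.length - 1) with h' | h'
    · exact List.pairwise_iff_getElem.mp hp i (l.length - 1) (by omega) (by omega) h'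
    · subst h'
      exact le_rfl
  have hu : Monotone u := by
    intro i j hij
    rcases eq_or_lt_of_le hij with rfl | hij'
    · exact le_refl _
    by_cases hj : j < l.length
    · have hi : i < l.length := lt_trans hij' hj
      rw [hu_def]
      simp only [List.getD_eq_getElem l d hi, List.getD_eq_getElem l d hj]
      exact List.pairwise_iff_getElem.mp hp i j hi hj hij'
    · push_neg at hj
      rw [hu_def]
      simp only [List.getD_eq_default l d hj]
      by_cases hi : i < l.length
      · rw [List.getD_eq_getElem l d hi]
        exact hle_last i hi
      · push_neg at hi
        rw [List.getD_eq_default l d hi]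
  have hus : ∀ i, u i ∈ s := by
    intro i
    by_cases hi : i < l.length
    · rw [hu_def]; simp only [List.getD_eq_getElem l d hi]
      exact hmem _ (List.getElem_mem hi)
    · push_neg at hi
      rw [hu_def]; simp only [List.getD_eq_default l d hi]
      exact hmem _ (List.getLast_mem hne)
  have hsum := eVariationOn.sum_le (f := γ) (n := l.length - 1) hu hus
  have heq : pathLen (l.map γ) =
      ∑ i ∈ Finset.range (l.length - 1), dist (γ (u (i+1))) (γ (u i)) := by
    rw [pathLen_eq_sum γ l d]
    exact Finset.sum_congr rfl fun i _ => dist_comm _ _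
  rw [heq]
  have hsum' : ENNReal.ofReal (∑ i ∈ Finset.range (l.length - 1), dist (γ (u (i+1))) (γ (u i)))
      ≤ eVariationOn γ s := by
    rw [ENNReal.ofReal_sum_of_nonneg (fun i _ => dist_nonneg)]
    simpa only [edist_dist] using hsum
  calc ∑ i ∈ Finset.range (l.length - 1), dist (γ (u (i+1))) (γ (u i))
      = (ENNReal.ofReal (∑ i ∈ Finset.range (l.length - 1),
          dist (γ (u (i+1))) (γ (u i)))).toReal :=
        (ENNReal.toReal_ofReal (Finset.sum_nonneg fun i _ => dist_nonneg)).symm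
    _ ≤ (eVariationOn γ s).toReal := ENNReal.toReal_mono hγ hsum'

end Bridge

section Extract

open scoped Classical

/-- Near-maximal strictly increasing partition for the arclength. -/
private lemma exists_chain_pathLen_ge (γ : ℝ → EuclideanSpace ℝ (Fin n))
    (hγ : BoundedVariationOn γ (Set.Icc 0 1)) {ε : ℝ} (hε : 0 < ε) :
    ∃ l : List ℝ, l.Chain' (· < ·) ∧ (∀ u ∈ l, u ∈ Set.Icc (0:ℝ) 1) ∧
      len γ - ε ≤ pathLen (l.map γ) := by
  rcases le_or_gt (len γ - ε) 0 with h0 | h0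
  · exact ⟨[], List.isChain_nil, by simp, by simpa [pathLen] using h0⟩
  · have hv : eVariationOn γ (Set.Icc 0 1) ≠ ⊤ := hγ
    have hoflt : ENNReal.ofReal (len γ - ε) < eVariationOn γ (Set.Icc 0 1) := by
      conv_rhs => rw [← ENNReal.ofReal_toReal hv]
      rw [ENNReal.ofReal_lt_ofReal_iff (by unfold len at h0; linarith)]
      unfold len at h0 ⊢
      linarith
    rw [eVariationOn] at hoflt
    obtain ⟨⟨m, u, hu, hus⟩, hp⟩ := lt_iSup_iff.mp hoflt
    simp only at hp
    -- the list of partition points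
    set l₀ : List ℝ := (List.range (m+1)).map u with hl₀
    have hl₀len : l₀.length = m + 1 := by simp [hl₀]
    have hl₀get : ∀ (i : ℕ) (hi : i < l₀.length), l₀[i] = u i := by
      intro i hi
      simp [hl₀]
    have hch₀ : l₀.Chain' (· ≤ ·) := by
      rw [hl₀]; show List.IsChain _ _; rw [List.isChain_map, List.isChain_range_succ]
      intro i _
      exact hu (Nat.le_succ i)
    have hsum : len γ - ε ≤ pathLen (l₀.map γ) := by
      have hgetD : ∀ i, i < m + 1 → l₀.getD i 0 = u i := by
        intro i hi
        rw [List.getD_eq_getElem l₀ 0 (by omega), hl₀get]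
      have hplen : pathLen (l₀.map γ) =
          ∑ i ∈ Finset.range m, dist (γ (u i)) (γ (u (i+1))) := by
        rw [pathLen_eq_sum γ l₀ 0]
        rw [hl₀len]
        simp only [Nat.add_sub_cancel]
        apply Finset.sum_congr rfl
        intro i hi
        rw [Finset.mem_range] at hi
        rw [hgetD i (by omega), hgetD (i+1) (by omega)]
      have hfin : (∑ i ∈ Finset.range m, edist (γ (u (i+1))) (γ (u i))).toReal
          = ∑ i ∈ Finset.range m, dist (γ (u i)) (γ (u (i+1))) := by
        simp only [edist_dist]
        rw [← ENNReal.ofReal_sum_of_nonneg (fun i _ => dist_nonneg),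
          ENNReal.toReal_ofReal (Finset.sum_nonneg fun i _ => dist_nonneg)]
        exact Finset.sum_congr rfl fun i _ => dist_comm _ _
      have hle := ENNReal.toReal_mono (ne_top_of_le_ne_top hv
        (eVariationOn.sum_le (f := γ) (n := m) hu hus)) hp.le
      rw [ENNReal.toReal_ofReal h0.le, hfin] at hle
      rw [hplen]
      linarith
    refine ⟨l₀.destutter (· < ·), List.isChain_destutter _ _, ?_, ?_⟩
    · intro x hx
      have := List.Sublist.mem hx (List.destutter_sublist _ _)
      rw [hl₀, List.mem_map] at this
      obtain ⟨i, _, rfl⟩ := this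
      exact hus i
    · rw [destutter_pathLen γ l₀ hch₀]
      exact hsum

/-- Comparing path lengths of two nearby curves over the same partition. -/
private lemma pathLen_compare (F G : ℝ → EuclideanSpace ℝ (Fin n)) {δ : ℝ} (hδ : 0 ≤ δ) :
    ∀ (l : List ℝ), (∀ u ∈ l, dist (F u) (G u) ≤ δ) →
      pathLen (l.map F) ≤ pathLen (l.map G) + 2 * δ * l.length
  | [], _ => by simp [pathLen]
  | [a], _ => by simp [pathLen]; positivity
  | a :: b :: r, h => by
    have IH := pathLen_compare F G hδ (b :: r) (fun u hu => h u (List.mem_cons_of_mem a hu))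
    have ha := h a (List.mem_cons_self)
    have hb := h b (List.mem_cons_of_mem a (List.mem_cons_self))
    have hd : dist (F a) (F b) ≤ dist (G a) (G b) + 2 * δ := by
      calc dist (F a) (F b) ≤ dist (F a) (G a) + dist (G a) (G b) + dist (G b) (F b) :=
            dist_triangle4 _ _ _ _
        _ ≤ δ + dist (G a) (G b) + δ := by
            have := dist_comm (G b) (F b) ▸ hb
            gcongr
        _ = dist (G a) (G b) + 2 * δ := by ring
    show dist (F a) (F b) + pathLen (List.map F (b :: r)) ≤
      dist (G a) (G b) + pathLen (List.map G (b :: r)) + 2 * δ * (r.length + 2 : ℕ)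
    push_cast
    have : ((b :: r).length : ℝ) = r.length + 1 := by push_cast [List.length_cons]; ring
    rw [this] at IH
    linarith

end Extract


private lemma chain'_map_le {P : ℝ → Prop} {σ : ℝ → ℝ}
    (hmono : ∀ a b, P a → P b → a < b → σ a ≤ σ b) :
    ∀ (l' : List ℝ), (∀ u ∈ l', P u) → l'.Chain' (· < ·) → (l'.map σ).Chain' (· ≤ ·)
  | [], _, _ => List.isChain_nil
  | [a], _, _ => List.isChain_singleton _
  | a :: b :: r, hmem, hch => by
    rw [List.map_cons, List.map_cons]; refine List.isChain_cons_cons.mpr ?_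
    obtain ⟨hab, hch'⟩ := List.isChain_cons_cons.mp hch
    refine ⟨hmono a b (hmem a (by simp)) (hmem b (by simp)) hab, ?_⟩
    rw [← List.map_cons]
    exact chain'_map_le hmono (b :: r) (fun u hu => hmem u (List.mem_cons_of_mem a hu)) hch'

/-- Key upper bound: small Fréchet distance plus bounded total curvature
bounds the length of `K` by roughly the length of `L`. -/
private lemma upper_estimate (K L : ℝ → EuclideanSpace ℝ (Fin n))
    (hKr : BoundedVariationOn K (Set.Icc 0 1))
    (hLr : BoundedVariationOn L (Set.Icc 0 1))
    {M : ℝ} (hM : ∀ x ∈ tcSet K, x ≤ M) (hM0 : 0 ≤ M)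
    {σ : ℝ → ℝ} (hσmem : ∀ t ∈ Set.Icc (0:ℝ) 1, σ t ∈ Set.Icc (0:ℝ) 1)
    (hσmono : StrictMonoOn σ (Set.Icc 0 1))
    {δ : ℝ} (hδ : 0 ≤ δ) (hclose : ∀ t ∈ Set.Icc (0:ℝ) 1, dist (K t) (L (σ t)) ≤ δ)
    {α ε' : ℝ} (hα : 0 < α) (hα2 : α < Real.pi / 2) (hε' : 0 < ε') :
    Real.cos α * (len K - ε') ≤ len L + 2 * δ * (M / α + 2) := by
  have hcos : 0 < Real.cos α := Real.cos_pos_of_mem_Ioo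
    ⟨by linarith [Real.pi_pos], hα2⟩
  obtain ⟨l, hlch, hlmem, hlge⟩ := exists_chain_pathLen_ge K hKr hε'
  have hts : turnSum (l.map K) ≤ M := hM _ ⟨l, hlch, hlmem, rfl⟩
  obtain ⟨r, hrsub, -, -, hrlen, hrpath⟩ := greedy K hα hα2 l.length l le_rfl M hM0 hts
  have hrmem : ∀ u ∈ r, u ∈ Set.Icc (0:ℝ) 1 := fun u hu => hlmem u (List.Sublist.mem hu hrsub)
  have hrch : r.Chain' (· < ·) := List.IsChain.sublist hlch hrsub
  have h4 : pathLen (r.map K) ≤ pathLen (r.map (L ∘ σ)) + 2 * δ * r.length :=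
    pathLen_compare K (L ∘ σ) hδ r (fun u hu => hclose u (hrmem u hu))
  have hσch : ((r.map σ)).Chain' (· ≤ ·) := by
    apply chain'_map_le (P := fun u => u ∈ Set.Icc (0:ℝ) 1)
      (fun a b ha hb hab => ((hσmono ha hb hab)).le) r hrmem hrch
  have h6 : pathLen ((r.map σ).map L) ≤ len L := by
    apply pathLen_le_eVariation L hLr (r.map σ) hσch
    intro v hv
    obtain ⟨u, hu, rfl⟩ := List.mem_map.mp hv
    exact hσmem u (hrmem u hu)
  have h5 : pathLen (r.map (L ∘ σ)) = pathLen ((r.map σ).map L) := by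
    rw [List.map_map]
  have hrlen' : 2 * δ * r.length ≤ 2 * δ * (M / α + 2) := by
    apply mul_le_mul_of_nonneg_left hrlen (by linarith)
  calc Real.cos α * (len K - ε') ≤ Real.cos α * pathLen (l.map K) := by
        apply mul_le_mul_of_nonneg_left hlge hcos.le
    _ ≤ pathLen (r.map K) := hrpath
    _ ≤ pathLen (r.map (L ∘ σ)) + 2 * δ * r.length := h4
    _ ≤ len L + 2 * δ * (M / α + 2) := by rw [h5]; exact add_le_add h6 hrlen'

/-- Key lower bound: a fixed inscribed polygon of `L` is nearly inscribed in `K`. -/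
private lemma lower_estimate (K L : ℝ → EuclideanSpace ℝ (Fin n))
    (hKr : BoundedVariationOn K (Set.Icc 0 1))
    (l : List ℝ) (hlch : l.Chain' (· < ·)) (hlmem : ∀ u ∈ l, u ∈ Set.Icc (0:ℝ) 1)
    {σ : ℝ → ℝ} (hσc : ContinuousOn σ (Set.Icc 0 1))
    (hσmono : StrictMonoOn σ (Set.Icc 0 1)) (hσ0 : σ 0 = 0) (hσ1 : σ 1 = 1)
    {δ : ℝ} (hδ : 0 ≤ δ) (hclose : ∀ t ∈ Set.Icc (0:ℝ) 1, dist (K t) (L (σ t)) ≤ δ) :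
    pathLen (l.map L) ≤ len K + 2 * δ * l.length := by
  have hsurj : ∀ u ∈ Set.Icc (0:ℝ) 1, ∃ t ∈ Set.Icc (0:ℝ) 1, σ t = u := by
    intro u hu
    have h01 : (0:ℝ) ≤ 1 := by norm_num
    have := intermediate_value_Icc h01 hσc
    rw [hσ0, hσ1] at this
    obtain ⟨t, ht, hσt⟩ := this hu
    exact ⟨t, ht, hσt⟩
  classical
  set τ : ℝ → ℝ := fun u => if h : u ∈ Set.Icc (0:ℝ) 1 then (hsurj u h).choose else 0 with hτ
  have hτmem : ∀ u ∈ Set.Icc (0:ℝ) 1, τ u ∈ Set.Icc (0:ℝ) 1 := by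
    intro u hu
    rw [hτ]; simp only [dif_pos hu]
    exact (hsurj u hu).choose_spec.1
  have hστ : ∀ u ∈ Set.Icc (0:ℝ) 1, σ (τ u) = u := by
    intro u hu
    rw [hτ]; simp only [dif_pos hu]
    exact (hsurj u hu).choose_spec.2
  set m : List ℝ := l.map τ with hm
  have hmmem : ∀ v ∈ m, v ∈ Set.Icc (0:ℝ) 1 := by
    intro v hv
    obtain ⟨u, hu, rfl⟩ := List.mem_map.mp hv
    exact hτmem u (hlmem u hu)
  have hmch : m.Chain' (· ≤ ·) := by
    apply chain'_map_le (P := fun u => u ∈ Set.Icc (0:ℝ) 1) ?_ l hlmem hlch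
    intro a b ha hb hab
    by_contra hcon
    push_neg at hcon
    have := hσmono (hτmem b hb) (hτmem a ha) hcon
    rw [hστ a ha, hστ b hb] at this
    linarith
  have heq : m.map (L ∘ σ) = l.map L := by
    rw [hm, List.map_map]
    apply List.map_congr_left
    intro u hu
    simp only [Function.comp_apply]
    rw [hστ u (hlmem u hu)]
  have h1 : pathLen (m.map (L ∘ σ)) ≤ pathLen (m.map K) + 2 * δ * m.length := by
    apply pathLen_compare (L ∘ σ) K hδ m
    intro v hv
    rw [Function.comp_apply, dist_comm]
    exact hclose v (hmmem v hv)
  have h2 : pathLen (m.map K) ≤ len K :=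
    pathLen_le_eVariation K hKr m hmch hmmem
  have h3 : m.length = l.length := by rw [hm, List.length_map]
  rw [heq, h3] at h1
  linarith

/-- If rectifiable curves `Kᵢ` converge to `L` in Fréchet
distance but their arclengths do not converge to the arclength of `L`, then
the total curvatures of the `Kᵢ` are unbounded: `sup_i TC(Kᵢ) = ∞`. -/
theorem totCurv_unbounded_of_len_not_tendsto {n : ℕ}
    (K : ℕ → ℝ → EuclideanSpace ℝ (Fin n)) (L : ℝ → EuclideanSpace ℝ (Fin n))
    (hKc : ∀ i, ContinuousOn (K i) (Set.Icc 0 1))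
    (hLc : ContinuousOn L (Set.Icc 0 1))
    (hKr : ∀ i, BoundedVariationOn (K i) (Set.Icc 0 1))
    (hLr : BoundedVariationOn L (Set.Icc 0 1))
    (hfr : Filter.Tendsto (fun i => frechetDist (K i) L) Filter.atTop (nhds 0))
    (hlen : ¬ Filter.Tendsto (fun i => len (K i)) Filter.atTop (nhds (len L))) :
    ∀ M : ℝ, ∃ i, ∃ x ∈ tcSet (K i), M < x := by
  by_contra hcon
  push_neg at hcon
  obtain ⟨M, hM⟩ := hcon
  apply hlen
  rw [Metric.tendsto_atTop]
  intro ε hε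
  have hM0 : 0 ≤ M := hM 0 0 ⟨[], List.isChain_nil, by simp, rfl⟩
  have hL0 : 0 ≤ len L := ENNReal.toReal_nonneg
  -- choose the angle α
  have hc₀ : len L / (len L + ε/4) < 1 := by
    rw [div_lt_one (by linarith)]; linarith
  set c₁ : ℝ := max (len L / (len L + ε/4)) (1/2) with hc₁
  have hc₁1 : c₁ < 1 := max_lt hc₀ (by norm_num)
  have hc₁0 : (0:ℝ) < c₁ := lt_of_lt_of_le (by norm_num) (le_max_right _ _)
  have hcont : Filter.Tendsto Real.cos (nhds 0) (nhds 1) := by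
    have := Real.continuous_cos.continuousAt (x := (0:ℝ))
    rwa [ContinuousAt, Real.cos_zero] at this
  have hev : ∀ᶠ x in nhds (0:ℝ), c₁ < Real.cos x := hcont.eventually (eventually_gt_nhds hc₁1)
  obtain ⟨η, hη, hball⟩ := Metric.eventually_nhds_iff.mp hev
  set α := min (η/2) (Real.pi/4) with hα_def
  have hα : 0 < α := lt_min (by linarith) (by linarith [Real.pi_pos])
  have hα2 : α < Real.pi/2 := lt_of_le_of_lt (min_le_right _ _) (by linarith [Real.pi_pos])
  have hcosα : c₁ < Real.cos α := by
    apply hball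
    rw [Real.dist_eq, sub_zero, abs_of_pos hα]
    calc α ≤ η/2 := min_le_left _ _
      _ < η := by linarith
  have hcos0 : 0 < Real.cos α := lt_trans hc₁0 hcosα
  have hlen_div : len L / Real.cos α < len L + ε/4 := by
    rw [div_lt_iff₀ hcos0]
    calc len L = (len L/(len L + ε/4)) * (len L + ε/4) := by field_simp
      _ ≤ c₁ * (len L + ε/4) := by
          apply mul_le_mul_of_nonneg_right (le_max_left _ _) (by linarith)
      _ < (len L + ε/4) * Real.cos α := by
          rw [mul_comm]
          exact mul_lt_mul_of_pos_left hcosα (by linarith)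
  set B : ℝ := M/α + 2 with hB
  have hB0 : 0 < B := by
    rw [hB]
    have : 0 ≤ M/α := div_nonneg hM0 hα.le
    linarith
  set δ₀ : ℝ := ε * Real.cos α/(8*B) with hδ₀
  have hδ₀0 : 0 < δ₀ := by positivity
  have hδ₀B : 2*δ₀*B/Real.cos α = ε/4 := by
    rw [hδ₀]
    field_simp
    ring
  -- the partition of L for the lower bound
  obtain ⟨lL, hlLch, hlLmem, hlLge⟩ := exists_chain_pathLen_ge L hLr (ε := ε/2) (by linarith)
  set NL := lL.length with hNL
  set δ₁ : ℝ := ε/(8*((NL:ℝ)+1)) with hδ₁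
  have hδ₁0 : 0 < δ₁ := by positivity
  have hδ₁N : 2*δ₁*(NL:ℝ) ≤ ε/4 := by
    have key : δ₁ * (8*((NL:ℝ)+1)) = ε := by rw [hδ₁]; field_simp
    nlinarith [key, mul_nonneg hδ₁0.le (Nat.cast_nonneg (α := ℝ) NL), hδ₁0.le]
  set δm : ℝ := min δ₀ δ₁ with hδm_def
  have hδm : 0 < δm := lt_min hδ₀0 hδ₁0
  obtain ⟨N, hN⟩ := (Metric.tendsto_atTop).mp hfr δm hδm
  refine ⟨N, fun i hi => ?_⟩
  have hfd : frechetDist (K i) L < δm := by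
    have := hN i hi
    rw [Real.dist_0_eq_abs] at this
    exact lt_of_abs_lt this
  have hfd' : (⨅ σ : {f : ℝ → ℝ // ContinuousOn f (Set.Icc 0 1) ∧
      StrictMonoOn f (Set.Icc 0 1) ∧ f 0 = 0 ∧ f 1 = 1},
      ⨆ t : Set.Icc (0:ℝ) 1, ‖K i t - L (σ.1 t)‖) < δm := hfd
  haveI : Nonempty {f : ℝ → ℝ // ContinuousOn f (Set.Icc 0 1) ∧
      StrictMonoOn f (Set.Icc 0 1) ∧ f 0 = 0 ∧ f 1 = 1} :=
    ⟨⟨fun x => x, continuous_id.continuousOn, fun a _ b _ h => h, rfl, rfl⟩⟩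
  obtain ⟨⟨σ, hσc, hσmono, hσ0, hσ1⟩, hσlt⟩ := exists_lt_of_ciInf_lt hfd'
  simp only at hσlt
  have h0mem : (0:ℝ) ∈ Set.Icc (0:ℝ) 1 := by norm_num
  have h1mem : (1:ℝ) ∈ Set.Icc (0:ℝ) 1 := by norm_num
  have hσmem : ∀ t ∈ Set.Icc (0:ℝ) 1, σ t ∈ Set.Icc (0:ℝ) 1 := by
    intro t ht
    obtain ⟨ht0, ht1⟩ := ht
    constructor
    · rw [← hσ0]
      exact hσmono.monotoneOn h0mem ⟨ht0, ht1⟩ ht0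
    · rw [← hσ1]
      exact hσmono.monotoneOn ⟨ht0, ht1⟩ h1mem ht1
  have hcont2 : ContinuousOn (fun t => ‖K i t - L (σ t)‖) (Set.Icc 0 1) :=
    ((hKc i).sub (hLc.comp hσc hσmem)).norm
  have hbdd : BddAbove (Set.range (fun t : Set.Icc (0:ℝ) 1 => ‖K i t.1 - L (σ t.1)‖)) := by
    obtain ⟨C, hC⟩ := (isCompact_Icc.image_of_continuousOn hcont2).bddAbove
    refine ⟨C, ?_⟩
    rintro x ⟨t, rfl⟩
    exact hC ⟨t.1, t.2, rfl⟩
  have hclose : ∀ t ∈ Set.Icc (0:ℝ) 1, dist (K i t) (L (σ t)) ≤ δm := by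
    intro t ht
    rw [dist_eq_norm]
    calc ‖K i t - L (σ t)‖ ≤ ⨆ t : Set.Icc (0:ℝ) 1, ‖K i t.1 - L (σ t.1)‖ :=
          le_ciSup hbdd ⟨t, ht⟩
      _ ≤ δm := hσlt.le
  -- upper bound on len (K i)
  have hup := upper_estimate (K i) L (hKr i) hLr (hM i) hM0 hσmem hσmono hδm.le hclose
    hα hα2 (ε' := ε/4) (by linarith)
  rw [← hB] at hup
  have hup2 : len (K i) - ε/4 ≤ (len L + 2*δm*B)/Real.cos α := by
    rw [le_div_iff₀ hcos0, mul_comm]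
    exact hup
  rw [add_div] at hup2
  have h2δ : 2*δm*B/Real.cos α ≤ ε/4 := by
    rw [← hδ₀B]
    have hnum : 2*δm*B ≤ 2*δ₀*B :=
      mul_le_mul_of_nonneg_right (by linarith [min_le_left δ₀ δ₁]) hB0.le
    exact by gcongr
  have hupper : len (K i) < len L + ε := by
    have := hlen_div
    linarith
  -- lower bound on len (K i)
  have hlow := lower_estimate (K i) L (hKr i) lL hlLch hlLmem hσc hσmono hσ0 hσ1 hδm.le hclose
  have h2δ' : 2*δm*(NL:ℝ) ≤ ε/4 := by
    have hmn : δm * (NL:ℝ) ≤ δ₁ * (NL:ℝ) :=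
      mul_le_mul_of_nonneg_right (min_le_right _ _) (Nat.cast_nonneg _)
    linarith [hδ₁N]
  have hlower : len L - ε < len (K i) := by
    rw [← hNL] at hlow
    linarith
  rw [Real.dist_eq, abs_lt]
  constructor <;> linarith
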